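/- If f and g are γ^{1/2}-convex and at least one of them is strictly γ^{1/2}-convex, then f∘g is strictly γ^{1/2}-convex. -/

import Mathlib

open Set

section AuxGammaHalf
open Set Filter Topology

/-- Sign of a nonvanishing continuous function on `Ici 0` is constant. -/
lemma aux_sign_const {F : ℝ → ℝ} (hF : ContinuousOn F (Ici 0))
    (hne : ∀ x ∈ Ici (0:ℝ), F x ≠ 0) :
    ∃ ε : ℝ, (ε = 1 ∨ ε = -1) ∧ ∀ x ∈ Ici (0:ℝ), 0 < ε * F x := by
  rcases lt_or_gt_of_ne (hne 0 self_mem_Ici) with h0 | h0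
  · refine ⟨-1, Or.inr rfl, fun x hx => ?_⟩
    rcases lt_or_gt_of_ne (hne x hx) with hx0 | hx0
    · nlinarith
    · exfalso
      have hsub : uIcc (0:ℝ) x ⊆ Ici 0 := by
        rw [uIcc_of_le hx]; exact Icc_subset_Ici_self
      have : (0:ℝ) ∈ uIcc (F 0) (F x) := by
        rw [mem_uIcc]; left; constructor <;> linarith
      obtain ⟨c, hc, hc0⟩ := intermediate_value_uIcc (hF.mono hsub) this
      exact hne c (hsub hc) hc0
  · refine ⟨1, Or.inl rfl, fun x hx => ?_⟩
    rcases lt_or_gt_of_ne (hne x hx) with hx0 | hx0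
    · exfalso
      have hsub : uIcc (0:ℝ) x ⊆ Ici 0 := by
        rw [uIcc_of_le hx]; exact Icc_subset_Ici_self
      have : (0:ℝ) ∈ uIcc (F 0) (F x) := by
        rw [mem_uIcc]; right; constructor <;> linarith
      obtain ⟨c, hc, hc0⟩ := intermediate_value_uIcc (hF.mono hsub) this
      exact hne c (hsub hc) hc0
    · nlinarith

/-- A function monotone on `Ioi 0` has nonnegative derivative there. -/
lemma aux_deriv_nonneg {m : ℝ → ℝ} {x d : ℝ} (hm : MonotoneOn m (Ioi 0)) (hx : (0:ℝ) < x)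
    (hd : HasDerivAt m d x) : 0 ≤ d := by
  have h := hasDerivAt_iff_tendsto_slope.mp hd
  have hmono : 𝓝[>] x ≤ 𝓝[≠] x :=
    nhdsWithin_mono x (fun y hy => ne_of_gt (α := ℝ) hy)
  have h2 : Filter.Tendsto (slope m x) (𝓝[>] x) (𝓝 d) := h.mono_left hmono
  refine ge_of_tendsto h2 ?_
  filter_upwards [self_mem_nhdsWithin] with y hy
  have hxy : x < y := hy
  rw [slope_def_field]
  have : m x ≤ m y := hm hx (hx.trans hxy) hxy.le
  have : (0:ℝ) ≤ (m y - m x) / (y - x) := div_nonneg (by linarith) (by linarith)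
  simpa [div_eq_inv_mul] using this

end AuxGammaHalf

open Filter Topology in
/-- If `f, g` are γ^{1/2}-convex (monotone, C³, nonvanishing derivative, `1/√|·'|` convex)
and at least one of them is strictly γ^{1/2}-convex, then `f ∘ g` is strictly
γ^{1/2}-convex. -/
theorem gammaHalfConvex_comp_strict (f g : ℝ → ℝ)
    (hf : ContDiffOn ℝ 3 f (Ici 0)) (hg : ContDiffOn ℝ 3 g (Ici 0))
    (hfmap : ∀ x ∈ Ici (0:ℝ), f x ∈ Ici (0:ℝ))
    (hgmap : ∀ x ∈ Ici (0:ℝ), g x ∈ Ici (0:ℝ))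
    (hfmono : MonotoneOn f (Ici 0) ∨ AntitoneOn f (Ici 0))
    (hgmono : MonotoneOn g (Ici 0) ∨ AntitoneOn g (Ici 0))
    (hf' : ∀ x ∈ Ici (0:ℝ), derivWithin f (Ici 0) x ≠ 0)
    (hg' : ∀ x ∈ Ici (0:ℝ), derivWithin g (Ici 0) x ≠ 0)
    (hfc : ConvexOn ℝ (Ici 0) (fun x => 1 / Real.sqrt |derivWithin f (Ici 0) x|))
    (hgc : ConvexOn ℝ (Ici 0) (fun x => 1 / Real.sqrt |derivWithin g (Ici 0) x|))
    (hstrict :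
      StrictConvexOn ℝ (Ici 0) (fun x => 1 / Real.sqrt |derivWithin f (Ici 0) x|) ∨
      StrictConvexOn ℝ (Ici 0) (fun x => 1 / Real.sqrt |derivWithin g (Ici 0) x|)) :
    StrictConvexOn ℝ (Ici 0) (fun x => 1 / Real.sqrt |derivWithin (f ∘ g) (Ici 0) x|) := by
  have hud : UniqueDiffOn ℝ (Ici (0:ℝ)) := uniqueDiffOn_Ici 0
  set S : Set ℝ := Ici 0 with hS
  set O : Set ℝ := Ioi 0 with hO
  have hOS : O ⊆ S := Ioi_subset_Ici_self
  set F1 : ℝ → ℝ := derivWithin f S with hF1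
  set G1 : ℝ → ℝ := derivWithin g S with hG1
  -- continuity of derivatives
  have hF1c : ContinuousOn F1 S := hf.continuousOn_derivWithin hud (by norm_num)
  have hG1c : ContinuousOn G1 S := hg.continuousOn_derivWithin hud (by norm_num)
  -- constant signs
  obtain ⟨εf, hεf, hεfpos⟩ := aux_sign_const hF1c hf'
  obtain ⟨εg, hεg, hεgpos⟩ := aux_sign_const hG1c hg'
  have hεf2 : εf * εf = 1 := by rcases hεf with h | h <;> rw [h] <;> norm_num
  have hεg2 : εg * εg = 1 := by rcases hεg with h | h <;> rw [h] <;> norm_num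
  -- derivWithin = deriv on the interior
  have hF1e : ∀ y ∈ O, F1 y = deriv f y := fun y hy =>
    derivWithin_of_mem_nhds (Ici_mem_nhds hy)
  have hG1e : ∀ x ∈ O, G1 x = deriv g x := fun x hx =>
    derivWithin_of_mem_nhds (Ici_mem_nhds hx)
  -- the convex factors
  set p : ℝ → ℝ := fun y => 1 / Real.sqrt |F1 y| with hp
  set q : ℝ → ℝ := fun x => 1 / Real.sqrt |G1 x| with hq
  -- smooth representatives on the interior
  set pf : ℝ → ℝ := fun y => (Real.sqrt (εf * deriv f y))⁻¹ with hpf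
  set qg : ℝ → ℝ := fun x => (Real.sqrt (εg * deriv g x))⁻¹ with hqg
  have habsf : ∀ y ∈ S, |F1 y| = εf * F1 y := by
    intro y hy
    rcases hεf with h | h <;> rw [h] at hεfpos ⊢
    · rw [one_mul]; exact abs_of_pos (by simpa using hεfpos y hy)
    · have := hεfpos y hy
      rw [abs_of_neg (by nlinarith)]; ring
  have habsg : ∀ x ∈ S, |G1 x| = εg * G1 x := by
    intro x hx
    rcases hεg with h | h <;> rw [h] at hεgpos ⊢
    · rw [one_mul]; exact abs_of_pos (by simpa using hεgpos x hx)
    · have := hεgpos x hx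
      rw [abs_of_neg (by nlinarith)]; ring
  have hpeq : EqOn p pf O := by
    intro y hy
    simp only [hp, hpf, one_div]
    rw [habsf y (hOS hy), hF1e y hy]
  have hqeq : EqOn q qg O := by
    intro x hx
    simp only [hq, hqg, one_div]
    rw [habsg x (hOS hx), hG1e x hx]
  -- positivity
  have hqg_pos : ∀ x ∈ O, 0 < qg x := by
    intro x hx
    have h1 : 0 < εg * deriv g x := by rw [← hG1e x hx]; exact hεgpos x (hOS hx)
    exact inv_pos.mpr (Real.sqrt_pos.mpr h1)
  have hpf_pos : ∀ y ∈ O, 0 < pf y := by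
    intro y hy
    have h1 : 0 < εf * deriv f y := by rw [← hF1e y hy]; exact hεfpos y (hOS hy)
    exact inv_pos.mpr (Real.sqrt_pos.mpr h1)
  -- g maps the interior into the interior
  have hgsm : StrictMonoOn g S ∨ StrictAntiOn g S := by
    rcases hεg with h | h
    · left
      apply strictMonoOn_of_deriv_pos (convex_Ici 0) hg.continuousOn
      intro y hy
      rw [interior_Ici] at hy
      have := hεgpos y (hOS hy)
      rw [h, one_mul, hG1e y hy] at this
      exact this
    · right
      apply strictAntiOn_of_deriv_neg (convex_Ici 0) hg.continuousOn
      intro y hy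
      rw [interior_Ici] at hy
      have := hεgpos y (hOS hy)
      rw [h, hG1e y hy] at this
      linarith
  have hgO : ∀ x ∈ O, g x ∈ O := by
    intro x hx
    have hx0 : (0:ℝ) < x := hx
    rcases hgsm with hmono | hmono
    · have h1 : g 0 < g x := hmono self_mem_Ici (hOS hx) hx0
      have h2 : (0:ℝ) ≤ g 0 := hgmap 0 self_mem_Ici
      exact lt_of_le_of_lt h2 h1
    · have h1 : g (x + 1) < g x := hmono (hOS hx) (mem_Ici.mpr (by linarith)) (by linarith)
      have h2 : (0:ℝ) ≤ g (x + 1) := hgmap (x + 1) (mem_Ici.mpr (by linarith))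
      exact lt_of_le_of_lt h2 h1
  -- smoothness of the representatives
  have hdf : ContDiffOn ℝ 2 (deriv f) O :=
    (hf.mono hOS).deriv_of_isOpen isOpen_Ioi (by norm_num)
  have hdg : ContDiffOn ℝ 2 (deriv g) O :=
    (hg.mono hOS).deriv_of_isOpen isOpen_Ioi (by norm_num)
  have hpfC : ContDiffOn ℝ 2 pf O := by
    intro y hy
    have h1 : 0 < εf * deriv f y := by rw [← hF1e y hy]; exact hεfpos y (hOS hy)
    exact (((contDiffOn_const.mul hdf) y hy).sqrt (ne_of_gt h1)).inv
      (ne_of_gt (Real.sqrt_pos.mpr h1))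
  have hqgC : ContDiffOn ℝ 2 qg O := by
    intro x hx
    have h1 : 0 < εg * deriv g x := by rw [← hG1e x hx]; exact hεgpos x (hOS hx)
    exact (((contDiffOn_const.mul hdg) x hx).sqrt (ne_of_gt h1)).inv
      (ne_of_gt (Real.sqrt_pos.mpr h1))
  -- pointwise derivative facts
  have hgat : ∀ x ∈ O, HasDerivAt g (deriv g x) x := by
    intro x hx
    exact (((hg.mono hOS).contDiffAt (isOpen_Ioi.mem_nhds hx)).differentiableAt
      (by norm_num)).hasDerivAt
  have hg1at : ∀ x ∈ O, HasDerivAt (deriv g) (deriv (deriv g) x) x := by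
    intro x hx
    exact ((hdg.contDiffAt (isOpen_Ioi.mem_nhds hx)).differentiableAt
      (by norm_num)).hasDerivAt
  have hpfat : ∀ y ∈ O, HasDerivAt pf (deriv pf y) y := by
    intro y hy
    exact ((hpfC.contDiffAt (isOpen_Ioi.mem_nhds hy)).differentiableAt
      (by norm_num)).hasDerivAt
  have hqgat : ∀ x ∈ O, HasDerivAt qg (deriv qg x) x := by
    intro x hx
    exact ((hqgC.contDiffAt (isOpen_Ioi.mem_nhds hx)).differentiableAt
      (by norm_num)).hasDerivAt
  have hpf1C : ContDiffOn ℝ 1 (deriv pf) O := hpfC.deriv_of_isOpen isOpen_Ioi (by norm_num)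
  have hqg1C : ContDiffOn ℝ 1 (deriv qg) O := hqgC.deriv_of_isOpen isOpen_Ioi (by norm_num)
  have hpf1at : ∀ y ∈ O, HasDerivAt (deriv pf) (deriv (deriv pf) y) y := by
    intro y hy
    exact ((hpf1C.contDiffAt (isOpen_Ioi.mem_nhds hy)).differentiableAt
      (by norm_num)).hasDerivAt
  have hqg1at : ∀ x ∈ O, HasDerivAt (deriv qg) (deriv (deriv qg) x) x := by
    intro x hx
    exact ((hqg1C.contDiffAt (isOpen_Ioi.mem_nhds hx)).differentiableAt
      (by norm_num)).hasDerivAt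
  -- the product function and its smooth representative
  set U : ℝ → ℝ := fun x => p (g x) * q x with hU
  set V : ℝ → ℝ := fun x => pf (g x) * qg x with hV
  have hUV : EqOn U V O := by
    intro x hx
    simp only [hU, hV]
    rw [hpeq (hgO x hx), hqeq hx]
  have hUVev : ∀ x ∈ O, U =ᶠ[𝓝 x] V := fun x hx =>
    eventuallyEq_of_mem (isOpen_Ioi.mem_nhds hx) hUV
  set V1 : ℝ → ℝ := fun x => deriv pf (g x) * deriv g x * qg x + pf (g x) * deriv qg x with hV1
  have hVder : ∀ x ∈ O, HasDerivAt V (V1 x) x := by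
    intro x hx
    have h1 : HasDerivAt (fun x => pf (g x)) (deriv pf (g x) * deriv g x) x :=
      (hpfat (g x) (hgO x hx)).comp x (hgat x hx)
    exact h1.mul (hqgat x hx)
  have hU1 : ∀ x ∈ O, deriv U x = V1 x := fun x hx =>
    ((hUVev x hx).deriv_eq).trans (hVder x hx).deriv
  have hU1ev : ∀ x ∈ O, deriv U =ᶠ[𝓝 x] V1 := fun x hx =>
    eventuallyEq_of_mem (isOpen_Ioi.mem_nhds hx) (fun y hy => hU1 y hy)
  -- second derivative of V1
  have hV1der : ∀ x ∈ O, HasDerivAt V1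
      ((deriv (deriv pf) (g x) * deriv g x * deriv g x + deriv pf (g x) * deriv (deriv g) x) * qg x
        + deriv pf (g x) * deriv g x * deriv qg x
        + (deriv pf (g x) * deriv g x * deriv qg x + pf (g x) * deriv (deriv qg) x)) x := by
    intro x hx
    have h1 : HasDerivAt (fun x => deriv pf (g x)) (deriv (deriv pf) (g x) * deriv g x) x :=
      (hpf1at (g x) (hgO x hx)).comp x (hgat x hx)
    have h2 : HasDerivAt (fun x => deriv pf (g x) * deriv g x)
        (deriv (deriv pf) (g x) * deriv g x * deriv g x + deriv pf (g x) * deriv (deriv g) x) x :=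
      h1.mul (hg1at x hx)
    have h3 : HasDerivAt (fun x => deriv pf (g x) * deriv g x * qg x)
        ((deriv (deriv pf) (g x) * deriv g x * deriv g x + deriv pf (g x) * deriv (deriv g) x)
          * qg x + deriv pf (g x) * deriv g x * deriv qg x) x := h2.mul (hqgat x hx)
    have h4 : HasDerivAt (fun x => pf (g x)) (deriv pf (g x) * deriv g x) x :=
      (hpfat (g x) (hgO x hx)).comp x (hgat x hx)
    have h5 : HasDerivAt (fun x => pf (g x) * deriv qg x)
        (deriv pf (g x) * deriv g x * deriv qg x + pf (g x) * deriv (deriv qg) x) x :=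
      h4.mul (hqg1at x hx)
    exact h3.add h5
  -- the key cancellation identity
  have hkey : ∀ x ∈ O, deriv (deriv g) x * qg x + 2 * deriv g x * deriv qg x = 0 := by
    intro x hx
    have hpos : 0 < εg * deriv g x := by rw [← hG1e x hx]; exact hεgpos x (hOS hx)
    have hKconst : EqOn (fun x => qg x ^ 2 * deriv g x) (fun _ => εg) O := by
      intro y hy
      have hpy : 0 < εg * deriv g y := by rw [← hG1e y hy]; exact hεgpos y (hOS hy)
      simp only [hqg]
      rw [inv_pow, Real.sq_sqrt hpy.le]
      have hne2 : deriv g y ≠ 0 := by rintro h; rw [h, mul_zero] at hpy; exact lt_irrefl 0 hpy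
      rw [mul_inv, mul_assoc, inv_mul_cancel₀ hne2, mul_one]
      rcases hεg with h | h <;> rw [h] <;> norm_num
    have hKder := ((hqgat x hx).pow 2).mul (hg1at x hx)
    have hK0 : deriv (fun x => qg x ^ 2 * deriv g x) x = 0 := by
      have : (fun x => qg x ^ 2 * deriv g x) =ᶠ[𝓝 x] (fun _ => εg) :=
        eventuallyEq_of_mem (isOpen_Ioi.mem_nhds hx) hKconst
      rw [this.deriv_eq, deriv_const]
    have h0 := hKder.deriv.symm.trans hK0
    push_cast at h0
    simp only [Pi.pow_apply] at h0
    have hqne : qg x ≠ 0 := ne_of_gt (hqg_pos x hx)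
    have hmul : qg x * (deriv (deriv g) x * qg x + 2 * deriv g x * deriv qg x) = 0 := by
      linear_combination h0
    rcases mul_eq_zero.mp hmul with h | h
    · exact absurd h hqne
    · exact h
  -- second derivative of U
  have hU2 : ∀ x ∈ O, deriv (deriv U) x
      = deriv (deriv pf) (g x) * deriv g x ^ 2 * qg x + pf (g x) * deriv (deriv qg) x := by
    intro x hx
    rw [(hU1ev x hx).deriv_eq, (hV1der x hx).deriv]
    have hk := hkey x hx
    linear_combination deriv pf (g x) * hk
  -- monotone derivatives of the factors
  have hpdiffAt : ∀ y ∈ O, DifferentiableAt ℝ p y := fun y hy =>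
    (Filter.EventuallyEq.differentiableAt_iff
      (eventuallyEq_of_mem (isOpen_Ioi.mem_nhds hy) hpeq)).mpr (hpfat y hy).differentiableAt
  have hqdiffAt : ∀ x ∈ O, DifferentiableAt ℝ q x := fun x hx =>
    (Filter.EventuallyEq.differentiableAt_iff
      (eventuallyEq_of_mem (isOpen_Ioi.mem_nhds hx) hqeq)).mpr (hqgat x hx).differentiableAt
  have hpderiv_eq : ∀ y ∈ O, deriv p y = deriv pf y := fun y hy =>
    (eventuallyEq_of_mem (isOpen_Ioi.mem_nhds hy) hpeq).deriv_eq
  have hqderiv_eq : ∀ x ∈ O, deriv q x = deriv qg x := fun x hx =>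
    (eventuallyEq_of_mem (isOpen_Ioi.mem_nhds hx) hqeq).deriv_eq
  have hmono_pf1 : MonotoneOn (deriv pf) O := by
    have h := (hfc.subset hOS (convex_Ioi 0)).monotoneOn_deriv hpdiffAt
    intro a ha b hb hab
    rw [← hpderiv_eq a ha, ← hpderiv_eq b hb]
    exact h ha hb hab
  have hmono_qg1 : MonotoneOn (deriv qg) O := by
    have h := (hgc.subset hOS (convex_Ioi 0)).monotoneOn_deriv hqdiffAt
    intro a ha b hb hab
    rw [← hqderiv_eq a ha, ← hqderiv_eq b hb]
    exact h ha hb hab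
  have hpf2_nonneg : ∀ y ∈ O, 0 ≤ deriv (deriv pf) y := fun y hy =>
    aux_deriv_nonneg hmono_pf1 hy (hpf1at y hy)
  have hqg2_nonneg : ∀ x ∈ O, 0 ≤ deriv (deriv qg) x := fun x hx =>
    aux_deriv_nonneg hmono_qg1 hx (hqg1at x hx)
  have hgne : ∀ x ∈ O, deriv g x ≠ 0 := by
    intro x hx h0
    have := hεgpos x (hOS hx)
    rw [hG1e x hx, h0, mul_zero] at this
    exact lt_irrefl 0 this
  -- continuity of V1
  have hgcont : ContinuousOn g O := hg.continuousOn.mono hOS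
  have hgMapsTo : MapsTo g O O := fun x hx => hgO x hx
  have hV1cont : ContinuousOn V1 O := by
    refine ContinuousOn.add (ContinuousOn.mul (ContinuousOn.mul ?_ hdg.continuousOn)
      hqgC.continuousOn) (ContinuousOn.mul ?_ hqg1C.continuousOn)
    · exact hpf1C.continuousOn.comp hgcont hgMapsTo
    · exact hpfC.continuousOn.comp hgcont hgMapsTo
  -- deriv U is monotone on O
  have hUmono : MonotoneOn (deriv U) O := by
    apply monotoneOn_of_deriv_nonneg (convex_Ioi 0) (hV1cont.congr hU1)
    · rw [interior_Ioi]
      intro x hx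
      exact ((Filter.EventuallyEq.differentiableAt_iff (hU1ev x hx)).mpr
        (hV1der x hx).differentiableAt).differentiableWithinAt
    · rw [interior_Ioi]
      intro x hx
      rw [hU2 x hx]
      exact add_nonneg
        (mul_nonneg (mul_nonneg (hpf2_nonneg (g x) (hgO x hx)) (sq_nonneg _))
          (hqg_pos x hx).le)
        (mul_nonneg (hpf_pos (g x) (hgO x hx)).le (hqg2_nonneg x hx))
  -- deriv U is strictly monotone on O
  have hUstrict : StrictMonoOn (deriv U) O := by
    intro a ha b hb hab
    rcases lt_or_eq_of_le (hUmono ha hb hab.le) with hlt | heq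
    · exact hlt
    exfalso
    have hconst : ∀ z ∈ Icc a b, deriv U z = deriv U a := by
      intro z hz
      have hzO : z ∈ O := lt_of_lt_of_le ha hz.1
      have h1 := hUmono ha hzO hz.1
      have h2 := hUmono hzO hb hz.2
      rw [← heq] at h2
      linarith
    have hPzero : ∀ z ∈ Ioo a b, deriv (deriv pf) (g z) = 0 ∧ deriv (deriv qg) z = 0 := by
      intro z hz
      have hzO : z ∈ O := lt_trans ha hz.1
      have hev : deriv U =ᶠ[𝓝 z] (fun _ => deriv U a) :=
        eventuallyEq_of_mem (isOpen_Ioo.mem_nhds hz) (fun w hw => hconst w (Ioo_subset_Icc_self hw))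
      have h0 : deriv (deriv U) z = 0 := by rw [hev.deriv_eq, deriv_const]
      rw [hU2 z hzO] at h0
      have hA : 0 ≤ deriv (deriv pf) (g z) * deriv g z ^ 2 * qg z :=
        mul_nonneg (mul_nonneg (hpf2_nonneg (g z) (hgO z hzO)) (sq_nonneg _)) (hqg_pos z hzO).le
      have hB : 0 ≤ pf (g z) * deriv (deriv qg) z :=
        mul_nonneg (hpf_pos (g z) (hgO z hzO)).le (hqg2_nonneg z hzO)
      have hA0 : deriv (deriv pf) (g z) * deriv g z ^ 2 * qg z = 0 := by linarith
      have hB0 : pf (g z) * deriv (deriv qg) z = 0 := by linarith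
      have hsq : deriv g z ^ 2 ≠ 0 := pow_ne_zero 2 (hgne z hzO)
      constructor
      · rcases mul_eq_zero.mp hA0 with h | h
        · rcases mul_eq_zero.mp h with h' | h'
          · exact h'
          · exact absurd h' hsq
        · exact absurd h (ne_of_gt (hqg_pos z hzO))
      · rcases mul_eq_zero.mp hB0 with h | h
        · exact absurd h (ne_of_gt (hpf_pos (g z) (hgO z hzO)))
        · exact h
    set a' := a + (b - a) / 3 with ha'
    set b' := b - (b - a) / 3 with hb'
    have haa' : a < a' := by rw [ha']; linarith
    have ha'b' : a' < b' := by rw [ha', hb']; linarith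
    have hb'b : b' < b := by rw [hb']; linarith
    have ha'O : a' ∈ O := lt_trans ha haa'
    have hb'O : b' ∈ O := lt_trans ha'O ha'b'
    have hIccO : Icc a' b' ⊆ O := fun z hz => lt_of_lt_of_le ha'O hz.1
    have hIccIoo : Icc a' b' ⊆ Ioo a b := fun z hz =>
      ⟨lt_of_lt_of_le haa' hz.1, lt_of_le_of_lt hz.2 hb'b⟩
    rcases hstrict with hsp | hsq
    · -- f strictly γ^{1/2}-convex
      have hp_sm : StrictMonoOn (deriv pf) O := by
        have h := (hsp.subset hOS (convex_Ioi 0)).strictMonoOn_deriv hpdiffAt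
        intro u hu v hv huv
        rw [← hpderiv_eq u hu, ← hpderiv_eq v hv]
        exact h hu hv huv
      set y1 := g a' with hy1
      set y2 := g b' with hy2
      have hy1O : y1 ∈ O := hgO a' ha'O
      have hy2O : y2 ∈ O := hgO b' hb'O
      have hy12 : y1 ≠ y2 := by
        rcases hgsm with h | h
        · exact ne_of_lt (h (hOS ha'O) (hOS hb'O) ha'b')
        · exact ne_of_gt (h (hOS ha'O) (hOS hb'O) ha'b')
      set c := min y1 y2 with hc
      set d := max y1 y2 with hd
      have hcd : c < d := min_lt_max.mpr hy12
      have hcO : c ∈ O := by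
        rcases min_choice y1 y2 with h | h <;> rw [hc, h]
        · exact hy1O
        · exact hy2O
      have hIcdO : Icc c d ⊆ O := fun z hz => lt_of_lt_of_le hcO hz.1
      have himage : uIcc y1 y2 ⊆ g '' uIcc a' b' :=
        intermediate_value_uIcc (hgcont.mono (by rw [uIcc_of_le ha'b'.le]; exact hIccO))
      have hP0 : ∀ y ∈ Icc c d, deriv (deriv pf) y = 0 := by
        intro y hy
        have hyu : y ∈ uIcc y1 y2 := by
          rw [uIcc_eq_union]
          rcases le_total y1 y2 with h | h
          · left
            rw [hc, min_eq_left h] at hy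
            rw [hd, max_eq_right h] at hy
            exact ⟨hy.1, hy.2⟩
          · right
            rw [hc, min_eq_right h] at hy
            rw [hd, max_eq_left h] at hy
            exact ⟨hy.1, hy.2⟩
        obtain ⟨z, hz, hzy⟩ := himage hyu
        rw [uIcc_of_le ha'b'.le] at hz
        have := (hPzero z (hIccIoo hz)).1
        rw [hzy] at this
        exact this
      have hcont : ContinuousOn (deriv pf) (Icc c d) := hpf1C.continuousOn.mono hIcdO
      have hdiff : DifferentiableOn ℝ (deriv pf) (Ioo c d) := fun z hz =>
        (hpf1at z (hIcdO (Ioo_subset_Icc_self hz))).differentiableAt.differentiableWithinAt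
      obtain ⟨e, he, heq2⟩ := exists_deriv_eq_slope (deriv pf) hcd hcont hdiff
      rw [hP0 e (Ioo_subset_Icc_self he)] at heq2
      have : deriv pf d = deriv pf c := by
        have hne : d - c ≠ 0 := by intro h; rw [sub_eq_zero] at h; exact (ne_of_gt hcd) h
        field_simp at heq2
        linarith
      have hlt2 := hp_sm hcO (hIcdO (right_mem_Icc.mpr hcd.le)) hcd
      rw [this] at hlt2
      exact lt_irrefl _ hlt2
    · -- g strictly γ^{1/2}-convex
      have hq_sm : StrictMonoOn (deriv qg) O := by
        have h := (hsq.subset hOS (convex_Ioi 0)).strictMonoOn_deriv hqdiffAt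
        intro u hu v hv huv
        rw [← hqderiv_eq u hu, ← hqderiv_eq v hv]
        exact h hu hv huv
      have hcont : ContinuousOn (deriv qg) (Icc a' b') := hqg1C.continuousOn.mono hIccO
      have hdiff : DifferentiableOn ℝ (deriv qg) (Ioo a' b') := fun z hz =>
        (hqg1at z (hIccO (Ioo_subset_Icc_self hz))).differentiableAt.differentiableWithinAt
      obtain ⟨e, he, heq2⟩ := exists_deriv_eq_slope (deriv qg) ha'b' hcont hdiff
      rw [(hPzero e (hIccIoo (Ioo_subset_Icc_self he))).2] at heq2
      have : deriv qg b' = deriv qg a' := by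
        have hne : b' - a' ≠ 0 := by
          intro h; rw [sub_eq_zero] at h; exact (ne_of_gt ha'b') h
        field_simp at heq2
        linarith
      have hlt2 := hq_sm ha'O hb'O ha'b'
      rw [this] at hlt2
      exact lt_irrefl _ hlt2
  -- U is continuous on S
  have hpcont : ContinuousOn p S := by
    apply ContinuousOn.div continuousOn_const
      (Real.continuous_sqrt.comp_continuousOn hF1c.abs)
    intro x hx
    exact ne_of_gt (Real.sqrt_pos.mpr (abs_pos.mpr (hf' x hx)))
  have hqcont : ContinuousOn q S := by
    apply ContinuousOn.div continuousOn_const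
      (Real.continuous_sqrt.comp_continuousOn hG1c.abs)
    intro x hx
    exact ne_of_gt (Real.sqrt_pos.mpr (abs_pos.mpr (hg' x hx)))
  have hUcont : ContinuousOn U S :=
    (hpcont.comp hg.continuousOn (fun x hx => hgmap x hx)).mul hqcont
  -- U is strictly convex on S
  have hUconv : StrictConvexOn ℝ S U := by
    apply StrictMonoOn.strictConvexOn_of_deriv (convex_Ici 0) hUcont
    rw [interior_Ici]
    exact hUstrict
  -- transfer to the original function
  have hkeyT : ∀ x ∈ S, 1 / Real.sqrt |derivWithin (f ∘ g) S x| = U x := by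
    intro x hx
    have hcomp : derivWithin (f ∘ g) S x = F1 (g x) * G1 x :=
      derivWithin_comp x (hf.differentiableOn (by norm_num) (g x) (hgmap x hx))
        (hg.differentiableOn (by norm_num) x hx) (fun y hy => hgmap y hy)
    rw [hcomp]
    simp only [hU, hp, hq, one_div]
    rw [abs_mul, Real.sqrt_mul (abs_nonneg _), mul_inv]
  refine ⟨convex_Ici 0, fun x hx y hy hxy aa bb haa hbb hab => ?_⟩
  have hmem : aa • x + bb • y ∈ S := (convex_Ici 0) hx hy haa.le hbb.le hab
  dsimp only
  rw [hkeyT x hx, hkeyT y hy, hkeyT _ hmem]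
  exact hUconv.2 hx hy hxy haa hbb hab
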